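/- arXiv:1809.01790 — 2 statements merged into one kernel-verified Lean document; each statement's English description precedes it below -/
import Mathlib

section
/- Let $d \ge 2$, $\sigma_s, \varepsilon > 0$, $s > 0$, and $\hat\theta \in (0, \pi/2)$ be the angle with $\frac{\nu_{d-1}}{\nu_d}\int_0^{\hat\theta}\sin^{d-2}\theta\,d\theta = \frac14$. Then for every $\xi$ with $|\xi| \le s$, $\widehat{k}(\xi) \le \frac12 \cdot \frac{1}{1 + \varepsilon^2 \frac{|\xi|^2}{\sigma_s^2}\cos^2\hat\theta} + \frac12$, and consequently there is a constant $C > 0$ independent of $\varepsilon$ with $\widehat{k}(\xi) \le \frac{1}{1 + C\varepsilon^2 |\xi|^2/\sigma_s^2}$ for $\varepsilon$ small enough. -/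
open MeasureTheory

namespace ScatteringAux

open Real intervalIntegral

/-- Volume of the unit ball in dimension `n`. -/
noncomputable def ballA (n : ℕ) : ℝ := Real.sqrt π ^ n / Real.Gamma ((n : ℝ) / 2 + 1)

lemma ballA_pos (n : ℕ) : 0 < ballA n :=
  div_pos (pow_pos (Real.sqrt_pos.mpr Real.pi_pos) n)
    (Real.Gamma_pos_of_pos (by positivity))

lemma ballA_rec (n : ℕ) : ballA (n + 2) = 2 * π * ballA n / ((n : ℝ) + 2) := by
  have hΓpos : 0 < Real.Gamma ((n : ℝ) / 2 + 1) := Real.Gamma_pos_of_pos (by positivity)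
  have h2 : Real.Gamma (((n : ℝ) + 2) / 2 + 1)
      = ((n : ℝ) / 2 + 1) * Real.Gamma ((n : ℝ) / 2 + 1) := by
    rw [show ((n : ℝ) + 2) / 2 + 1 = ((n : ℝ) / 2 + 1) + 1 by ring,
      Real.Gamma_add_one (by positivity)]
  have hsq : Real.sqrt π ^ 2 = π := Real.sq_sqrt Real.pi_pos.le
  simp only [ballA]
  push_cast
  rw [h2, pow_add, hsq]
  have hn2 : ((n : ℝ) / 2 + 1) ≠ 0 := by positivity
  have hn2' : ((n : ℝ) + 2) ≠ 0 := by positivity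
  field_simp

/-- `∫₀^π sin^n`. -/
noncomputable def sinInt (n : ℕ) : ℝ := ∫ x in (0 : ℝ)..π, Real.sin x ^ n

lemma sinInt_rec (n : ℕ) : sinInt (n + 2) = ((n : ℝ) + 1) / ((n : ℝ) + 2) * sinInt n := by
  simp [sinInt, integral_sin_pow]

lemma gamma_half : Real.Gamma ((1 : ℝ) / 2 + 1) = Real.sqrt π / 2 := by
  rw [Real.Gamma_add_one (by norm_num), Real.Gamma_one_half_eq]
  ring

lemma ballA_one : ballA 1 = 2 := by
  simp only [ballA]
  rw [show ((1 : ℕ) : ℝ) / 2 + 1 = (1 : ℝ) / 2 + 1 by norm_num, gamma_half]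
  have : Real.sqrt π ≠ 0 := (Real.sqrt_pos.mpr Real.pi_pos).ne'
  field_simp

lemma ballA_two : ballA 2 = π := by
  simp only [ballA]
  rw [show ((2 : ℕ) : ℝ) / 2 + 1 = (2 : ℝ) by norm_num, Real.Gamma_two,
    Real.sq_sqrt Real.pi_pos.le]
  simp

lemma ballA_three : ballA 3 = 4 * π / 3 := by
  rw [show ballA 3 = ballA (1 + 2) from rfl, ballA_rec, ballA_one]
  push_cast
  ring

lemma key (n : ℕ) :
    ((n : ℝ) + 1) * ballA (n + 1) * sinInt n = ((n : ℝ) + 2) * ballA (n + 2) := by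
  induction n using Nat.twoStepInduction with
  | zero =>
    have h0 : sinInt 0 = π := by simp [sinInt]
    norm_num [h0, ballA_one, ballA_two]
  | one =>
    have h0 : sinInt 1 = 2 := by simp [sinInt]; norm_num
    norm_num [h0, ballA_two, ballA_three]
    ring
  | more n ih _ =>
    have e1 : ballA (n + 2 + 1) = 2 * π * ballA (n + 1) / ((n : ℝ) + 3) := by
      rw [show n + 2 + 1 = (n + 1) + 2 by ring, ballA_rec]; push_cast; ring_nf
    have e2 : ballA (n + 2 + 2) = 2 * π * ballA (n + 2) / ((n : ℝ) + 4) := by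
      rw [ballA_rec]; push_cast; ring_nf
    rw [e1, e2, sinInt_rec]
    push_cast
    have h2 : ((n : ℝ) + 2) ≠ 0 := by positivity
    have h3 : ((n : ℝ) + 3) ≠ 0 := by positivity
    have h4 : ((n : ℝ) + 4) ≠ 0 := by positivity
    field_simp
    linear_combination (((n : ℝ) + 3) * ((n : ℝ) + 4)) * ih

lemma toSphere_univ_toReal (n : ℕ) (hn : 0 < n) :
    ((volume : Measure (EuclideanSpace ℝ (Fin n))).toSphere Set.univ).toReal
      = n * ballA n := by
  haveI : Nonempty (Fin n) := ⟨⟨0, hn⟩⟩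
  rw [Measure.toSphere_apply_univ, EuclideanSpace.volume_ball (Fin n) 0 1]
  simp only [ENNReal.ofReal_one, one_pow, one_mul, finrank_euclideanSpace_fin,
    Fintype.card_fin]
  rw [ENNReal.toReal_mul, ENNReal.toReal_natCast _]
  congr 1
  exact ENNReal.toReal_ofReal (ballA_pos n).le

lemma norm_total (d : ℕ) (hd : 2 ≤ d) :
    ((volume : Measure (EuclideanSpace ℝ (Fin (d - 1)))).toSphere Set.univ).toReal /
      ((volume : Measure (EuclideanSpace ℝ (Fin d))).toSphere Set.univ).toReal *
      ∫ θ in (0 : ℝ)..π, Real.sin θ ^ (d - 2) = 1 := by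
  obtain ⟨n, rfl⟩ : ∃ n, d = n + 2 := ⟨d - 2, by omega⟩
  have h1 : n + 2 - 1 = n + 1 := by omega
  have h2 : n + 2 - 2 = n := by omega
  rw [h1, h2, toSphere_univ_toReal (n + 1) (by omega), toSphere_univ_toReal (n + 2) (by omega)]
  have hden : (0 : ℝ) < ((n + 2 : ℕ) : ℝ) * ballA (n + 2) :=
    mul_pos (by positivity) (ballA_pos _)
  rw [div_mul_eq_mul_div, div_eq_one_iff_eq hden.ne']
  have hkey := key n
  simp only [sinInt] at hkey
  push_cast

  linear_combination hkey

lemma part2_aux (c0 x : ℝ) (hc0 : 0 < c0) (hc1 : c0 ≤ 1) (hx0 : 0 ≤ x) (hx1 : x ≤ 1) :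
    1 / 2 * (1 / (1 + x * c0)) + 1 / 2 ≤ 1 / (1 + c0 / 4 * x) := by
  have h1 : (0 : ℝ) < 1 + x * c0 := by nlinarith
  have h2 : (0 : ℝ) < 1 + c0 / 4 * x := by nlinarith
  have e : 1 / 2 * (1 / (1 + x * c0)) + 1 / 2 = (2 + x * c0) / (2 * (1 + x * c0)) := by
    field_simp; ring
  rw [e, div_le_div_iff₀ (by linarith) h2]
  have hcx : c0 * x ≤ 1 := by nlinarith
  nlinarith [mul_nonneg hc0.le hx0]

lemma part1_aux (m : ℕ) (c θhat a : ℝ) (hc : 0 ≤ c) (ha : 0 ≤ a)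
    (hθ1 : 0 < θhat) (hθ2 : θhat < π / 2)
    (hquarter : c * ∫ θ in (0 : ℝ)..θhat, Real.sin θ ^ m = 1 / 4)
    (hone : c * ∫ θ in (0 : ℝ)..π, Real.sin θ ^ m = 1) :
    c * ∫ θ in (0 : ℝ)..π, Real.sin θ ^ m / (1 + a * Real.cos θ ^ 2) ≤
      1 / 2 * (1 / (1 + a * Real.cos θhat ^ 2)) + 1 / 2 := by
  have hπ : θhat < π := hθ2.trans (by linarith [Real.pi_pos])
  have h0θ : (0 : ℝ) ≤ θhat := hθ1.le
  have hmid : θhat ≤ π - θhat := by linarith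
  have hcosθ : 0 < Real.cos θhat := Real.cos_pos_of_mem_Ioo ⟨by linarith, hθ2⟩
  set b := a * Real.cos θhat ^ 2 with hb
  have hb0 : 0 ≤ b := by positivity
  have hposd : ∀ θ : ℝ, 0 < 1 + a * Real.cos θ ^ 2 := fun θ => by positivity
  set f : ℝ → ℝ := fun θ => Real.sin θ ^ m / (1 + a * Real.cos θ ^ 2) with hf
  have hcont : Continuous f := Continuous.div (by fun_prop) (by fun_prop)
    fun θ => (hposd θ).ne'
  have hif : ∀ u v : ℝ, IntervalIntegrable f volume u v :=
    fun u v => hcont.intervalIntegrable u v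
  have hig : ∀ u v : ℝ, IntervalIntegrable (fun θ => Real.sin θ ^ m) volume u v :=
    fun u v => (Continuous.intervalIntegrable (by fun_prop) u v)
  have hsin_nonneg : ∀ θ ∈ Set.Icc (0 : ℝ) π, 0 ≤ Real.sin θ ^ m :=
    fun θ hθ => pow_nonneg (Real.sin_nonneg_of_nonneg_of_le_pi hθ.1 hθ.2) m
  -- flip lemma
  have hflip : (∫ θ in (π - θhat)..π, Real.sin θ ^ m) = ∫ θ in (0 : ℝ)..θhat, Real.sin θ ^ m := by
    have h := intervalIntegral.integral_comp_sub_left (a := 0) (b := θhat)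
      (fun x => Real.sin x ^ m) π
    simp only [Real.sin_pi_sub, sub_zero] at h
    exact h.symm
  -- bound on [0, θhat]
  have hI1 : (∫ θ in (0 : ℝ)..θhat, f θ)
      ≤ (∫ θ in (0 : ℝ)..θhat, Real.sin θ ^ m) / (1 + b) := by
    rw [div_eq_mul_inv, ← intervalIntegral.integral_mul_const]
    apply intervalIntegral.integral_mono_on h0θ (hif 0 θhat)
      (((hig 0 θhat).mul_const _))
    intro θ hθ
    have h1 : 0 ≤ Real.sin θ ^ m := hsin_nonneg θ ⟨hθ.1, hθ.2.trans hπ.le⟩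
    have h2 : Real.cos θhat ≤ Real.cos θ :=
      Real.cos_le_cos_of_nonneg_of_le_pi hθ.1 hπ.le hθ.2
    have hsq : Real.cos θhat ^ 2 ≤ Real.cos θ ^ 2 := by
      nlinarith [mul_nonneg (by linarith : (0:ℝ) ≤ Real.cos θ - Real.cos θhat)
        (by linarith : (0:ℝ) ≤ Real.cos θ + Real.cos θhat)]
    have h3 : 1 + b ≤ 1 + a * Real.cos θ ^ 2 := by
      have := mul_le_mul_of_nonneg_left hsq ha
      rw [hb]; linarith
    calc f θ ≤ Real.sin θ ^ m / (1 + b) :=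
          div_le_div_of_nonneg_left h1 (by linarith) h3
      _ = Real.sin θ ^ m * (1 + b)⁻¹ := div_eq_mul_inv _ _
  -- bound on [π - θhat, π]
  have hI3 : (∫ θ in (π - θhat)..π, f θ)
      ≤ (∫ θ in (0 : ℝ)..θhat, Real.sin θ ^ m) / (1 + b) := by
    rw [← hflip, div_eq_mul_inv, ← intervalIntegral.integral_mul_const]
    apply intervalIntegral.integral_mono_on (by linarith) (hif _ _)
      (((hig _ _).mul_const _))
    intro θ hθ
    have h1 : 0 ≤ Real.sin θ ^ m := hsin_nonneg θ ⟨by linarith [hθ.1], hθ.2⟩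
    have h2 : Real.cos θ ≤ Real.cos (π - θhat) :=
      Real.cos_le_cos_of_nonneg_of_le_pi (by linarith [hθ.1]) hθ.2 hθ.1
    rw [Real.cos_pi_sub] at h2
    have hsq : Real.cos θhat ^ 2 ≤ Real.cos θ ^ 2 := by
      nlinarith [mul_nonneg (by linarith : (0:ℝ) ≤ -Real.cos θ - Real.cos θhat)
        (by linarith : (0:ℝ) ≤ -Real.cos θ + Real.cos θhat)]
    have h3 : 1 + b ≤ 1 + a * Real.cos θ ^ 2 := by
      have := mul_le_mul_of_nonneg_left hsq ha
      rw [hb]; linarith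
    calc f θ ≤ Real.sin θ ^ m / (1 + b) :=
          div_le_div_of_nonneg_left h1 (by linarith) h3
      _ = Real.sin θ ^ m * (1 + b)⁻¹ := div_eq_mul_inv _ _
  -- bound in the middle
  have hI2 : (∫ θ in θhat..(π - θhat), f θ)
      ≤ ∫ θ in θhat..(π - θhat), Real.sin θ ^ m := by
    apply intervalIntegral.integral_mono_on hmid (hif _ _) (hig _ _)
    intro θ hθ
    have h1 : 0 ≤ Real.sin θ ^ m := hsin_nonneg θ ⟨by linarith [hθ.1], by linarith [hθ.2]⟩
    exact div_le_self h1 (by nlinarith [sq_nonneg (Real.cos θ)])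
  -- splitting
  have hsplitf : (∫ θ in (0 : ℝ)..π, f θ)
      = (∫ θ in (0 : ℝ)..θhat, f θ) + (∫ θ in θhat..(π - θhat), f θ)
        + ∫ θ in (π - θhat)..π, f θ := by
    rw [intervalIntegral.integral_add_adjacent_intervals (hif 0 θhat) (hif θhat (π - θhat)),
      intervalIntegral.integral_add_adjacent_intervals (hif 0 (π - θhat)) (hif (π - θhat) π)]
  have hsplitg : (∫ θ in (0 : ℝ)..π, Real.sin θ ^ m)
      = (∫ θ in (0 : ℝ)..θhat, Real.sin θ ^ m)
        + (∫ θ in θhat..(π - θhat), Real.sin θ ^ m)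
        + ∫ θ in (π - θhat)..π, Real.sin θ ^ m := by
    rw [intervalIntegral.integral_add_adjacent_intervals (hig 0 θhat) (hig θhat (π - θhat)),
      intervalIntegral.integral_add_adjacent_intervals (hig 0 (π - θhat)) (hig (π - θhat) π)]
  -- mass of the middle piece
  have hmass : c * ∫ θ in θhat..(π - θhat), Real.sin θ ^ m = 1 / 2 := by
    have h := hone
    rw [hsplitg, hflip] at h
    nlinarith [hquarter]
  -- put everything together
  have hsum : c * ∫ θ in (0 : ℝ)..π, f θ
      = c * (∫ θ in (0 : ℝ)..θhat, f θ) + c * (∫ θ in θhat..(π - θhat), f θ)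
        + c * ∫ θ in (π - θhat)..π, f θ := by
    rw [hsplitf]; ring
  have hc1 : c * (∫ θ in (0 : ℝ)..θhat, f θ)
      ≤ 1 / 4 * (1 / (1 + b)) := by
    calc c * (∫ θ in (0 : ℝ)..θhat, f θ)
        ≤ c * ((∫ θ in (0 : ℝ)..θhat, Real.sin θ ^ m) / (1 + b)) :=
          mul_le_mul_of_nonneg_left hI1 hc
      _ = 1 / 4 * (1 / (1 + b)) := by rw [← hquarter]; ring
  have hc3 : c * (∫ θ in (π - θhat)..π, f θ)
      ≤ 1 / 4 * (1 / (1 + b)) := by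
    calc c * (∫ θ in (π - θhat)..π, f θ)
        ≤ c * ((∫ θ in (0 : ℝ)..θhat, Real.sin θ ^ m) / (1 + b)) :=
          mul_le_mul_of_nonneg_left hI3 hc
      _ = 1 / 4 * (1 / (1 + b)) := by rw [← hquarter]; ring
  have hc2 : c * (∫ θ in θhat..(π - θhat), f θ) ≤ 1 / 2 := by
    calc c * (∫ θ in θhat..(π - θhat), f θ)
        ≤ c * ∫ θ in θhat..(π - θhat), Real.sin θ ^ m :=
          mul_le_mul_of_nonneg_left hI2 hc
      _ = 1 / 2 := hmass
  rw [show (c * ∫ θ in (0 : ℝ)..π, Real.sin θ ^ m / (1 + a * Real.cos θ ^ 2))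
      = c * ∫ θ in (0 : ℝ)..π, f θ from rfl, hsum]
  linarith

end ScatteringAux

open ScatteringAux in
/-- Bound on the Fourier symbol of the scattering kernel for low frequencies `|ξ| ≤ s`,
and the resulting bound `k̂(ξ) ≤ 1/(1 + C ε² |ξ|²/σ_s²)` for small `ε`, with `C`
independent of `ε`. -/
theorem scattering_symbol_low_freq_bound (d : ℕ) (hd : 2 ≤ d) (σs s θhat : ℝ)
    (hσ : 0 < σs) (hs : 0 < s) (hθ1 : 0 < θhat) (hθ2 : θhat < Real.pi / 2) :
    let νd := ((volume : Measure (EuclideanSpace ℝ (Fin d))).toSphere Set.univ).toReal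
    let νd1 := ((volume : Measure (EuclideanSpace ℝ (Fin (d - 1)))).toSphere Set.univ).toReal
    let F : ℝ → ℝ → ℝ := fun ε r => νd1 / νd *
      ∫ θ in (0 : ℝ)..Real.pi,
        (Real.sin θ) ^ (d - 2) / (1 + ε ^ 2 * r ^ 2 / σs ^ 2 * (Real.cos θ) ^ 2)
    νd1 / νd * ∫ θ in (0 : ℝ)..θhat, (Real.sin θ) ^ (d - 2) = 1 / 4 →
    ((∀ ε : ℝ, 0 < ε → ∀ r : ℝ, 0 ≤ r → r ≤ s →
        F ε r ≤ 1 / 2 * (1 / (1 + ε ^ 2 * r ^ 2 / σs ^ 2 * (Real.cos θhat) ^ 2)) + 1 / 2) ∧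
      ∃ C > 0, ∃ ε₀ > 0, ∀ ε : ℝ, 0 < ε → ε ≤ ε₀ → ∀ r : ℝ, 0 ≤ r → r ≤ s →
        F ε r ≤ 1 / (1 + C * ε ^ 2 * r ^ 2 / σs ^ 2)) := by
  intro νd νd1 F hnorm
  have hc : 0 ≤ νd1 / νd := div_nonneg ENNReal.toReal_nonneg ENNReal.toReal_nonneg
  have hone : νd1 / νd * ∫ θ in (0 : ℝ)..Real.pi, Real.sin θ ^ (d - 2) = 1 :=
    norm_total d hd
  have hcosθ : 0 < Real.cos θhat := Real.cos_pos_of_mem_Ioo ⟨by linarith [Real.pi_pos], hθ2⟩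
  have part1 : ∀ ε : ℝ, 0 < ε → ∀ r : ℝ, 0 ≤ r → r ≤ s →
      F ε r ≤ 1 / 2 * (1 / (1 + ε ^ 2 * r ^ 2 / σs ^ 2 * (Real.cos θhat) ^ 2)) + 1 / 2 := by
    intro ε hε r hr hrs
    exact part1_aux (d - 2) (νd1 / νd) θhat (ε ^ 2 * r ^ 2 / σs ^ 2) hc (by positivity)
      hθ1 hθ2 hnorm hone
  refine ⟨part1, Real.cos θhat ^ 2 / 4, by positivity, σs / s, by positivity, ?_⟩
  intro ε hε hεε r hr hrs
  have hx0 : 0 ≤ ε ^ 2 * r ^ 2 / σs ^ 2 := by positivity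
  have hx1 : ε ^ 2 * r ^ 2 / σs ^ 2 ≤ 1 := by
    rw [div_le_one (by positivity)]
    have hε2 : ε ^ 2 ≤ (σs / s) ^ 2 := by nlinarith
    have hr2 : r ^ 2 ≤ s ^ 2 := by nlinarith
    calc ε ^ 2 * r ^ 2 ≤ (σs / s) ^ 2 * s ^ 2 := by nlinarith [sq_nonneg ε, sq_nonneg r]
      _ = σs ^ 2 := by field_simp
  have hc1 : Real.cos θhat ^ 2 ≤ 1 := by
    nlinarith [Real.cos_le_one θhat, hcosθ.le]
  calc F ε r ≤ 1 / 2 * (1 / (1 + ε ^ 2 * r ^ 2 / σs ^ 2 * (Real.cos θhat) ^ 2)) + 1 / 2 :=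
        part1 ε hε r hr hrs
    _ ≤ 1 / (1 + Real.cos θhat ^ 2 / 4 * (ε ^ 2 * r ^ 2 / σs ^ 2)) :=
        part2_aux (Real.cos θhat ^ 2) (ε ^ 2 * r ^ 2 / σs ^ 2) (by positivity) hc1 hx0 hx1
    _ = 1 / (1 + Real.cos θhat ^ 2 / 4 * ε ^ 2 * r ^ 2 / σs ^ 2) := by ring_nf
end

section
/- Let $q > 0$, $d \ge 2$, and let $X_{q\theta\beta} = \{f \in C_0^q(K) : \|f\|_\infty \le \theta, \|f\|_{C^q} \le \beta, f \ge 0\}$ with metric induced by the $L^\infty$ norm, where $K$ is a closed ball in $\mathbb{R}^d$. Then there is a constant $\mu > 0$ such that for any $\beta > 0$ and $\theta \in (0, \mu\beta)$, there exists a $\theta$-distinguishable subset $Z \subset X_{q\theta\beta}$ (i.e., $\|z_1 - z_2\|_\infty \ge \theta$ for all distinct $z_1, z_2 \in Z$) with $|Z| \ge \exp\big(2^{-d-1}(\mu\beta/\theta)^{d/q}\big)$. -/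
open scoped NNReal

open Classical in

/-- The Hölder/`C^q` norm of a function `f : ℝ^d → ℝ` for real `q > 0`:
the sup norms of the iterated derivatives up to order `⌊q⌋`, plus the Hölder
seminorm of exponent `q - ⌊q⌋` of the top-order derivative. -/
noncomputable def cqNorm (d : ℕ) (q : ℝ) (f : EuclideanSpace ℝ (Fin d) → ℝ) : ℝ :=
  (⨆ i : Fin (⌊q⌋₊ + 1), ⨆ x : EuclideanSpace ℝ (Fin d), ‖iteratedFDeriv ℝ i f x‖) +
    ⨆ p : EuclideanSpace ℝ (Fin d) × EuclideanSpace ℝ (Fin d),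
      if p.1 = p.2 then 0 else
        ‖iteratedFDeriv ℝ ⌊q⌋₊ f p.1 - iteratedFDeriv ℝ ⌊q⌋₊ f p.2‖ /
          ‖p.1 - p.2‖ ^ (q - (⌊q⌋₊ : ℝ))

section Aux

variable {E F : Type*} [NormedAddCommGroup E] [NormedSpace ℝ E]
  [NormedAddCommGroup F] [NormedSpace ℝ F]

lemma my_eventuallyEq_iteratedFDeriv_eq {f₁ f : E → F} {x : E} (h : f₁ =ᶠ[nhds x] f) (n : ℕ) :
    iteratedFDeriv ℝ n f₁ x = iteratedFDeriv ℝ n f x := by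
  rw [← iteratedFDerivWithin_univ, ← iteratedFDerivWithin_univ]
  exact Filter.EventuallyEq.iteratedFDerivWithin_eq (by rwa [nhdsWithin_univ]) h.eq_of_nhds n

lemma my_iteratedFDeriv_comp_add (f : E → F) (hf : ContDiff ℝ (⊤ : ℕ∞) f) (a : E) (n : ℕ) :
    ∀ x, iteratedFDeriv ℝ n (fun y => f (y + a)) x = iteratedFDeriv ℝ n f (x + a) := by
  induction n with
  | zero => intro x; ext m; simp
  | succ n IH =>
    intro x
    rw [iteratedFDeriv_succ_eq_comp_left, iteratedFDeriv_succ_eq_comp_left]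
    simp only [Function.comp_apply]
    congr 1
    have h1 : iteratedFDeriv ℝ n (fun y => f (y + a)) = fun y => iteratedFDeriv ℝ n f (y + a) :=
      funext IH
    rw [h1]
    have hdiff : Differentiable ℝ (iteratedFDeriv ℝ n f) :=
      hf.differentiable_iteratedFDeriv (mod_cast WithTop.coe_lt_top _)
    have h3 : HasFDerivAt (fun y : E => y + a) (ContinuousLinearMap.id ℝ E) x :=
      (hasFDerivAt_id x).add_const a
    have h2 : HasFDerivAt (fun y => iteratedFDeriv ℝ n f (y + a))
        (fderiv ℝ (iteratedFDeriv ℝ n f) (x + a)) x := by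
      exact ((hdiff (x + a)).hasFDerivAt).comp x h3
    rw [h2.fderiv]

lemma my_norm_iteratedFDeriv_comp_smul_add (f : E → F) (hf : ContDiff ℝ (⊤ : ℕ∞) f)
    (s : ℝ) (a : E) (n : ℕ) (x : E) :
    ‖iteratedFDeriv ℝ n (fun y => f (s • y + a)) x‖ ≤
      |s| ^ n * ‖iteratedFDeriv ℝ n f (s • x + a)‖ := by
  set f1 : E → F := fun y => f (y + a) with hf1def
  have hf1 : ContDiff ℝ (⊤ : ℕ∞) f1 := hf.comp (contDiff_id.add contDiff_const)
  set L : E →L[ℝ] E := s • ContinuousLinearMap.id ℝ E with hL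
  have hLnorm : ‖L‖ ≤ |s| := by
    refine ContinuousLinearMap.opNorm_le_bound _ (abs_nonneg s) (fun y => ?_)
    have : L y = s • y := rfl
    rw [this, norm_smul, Real.norm_eq_abs]
  have hcomp : (fun y => f (s • y + a)) = f1 ∘ L := rfl
  rw [hcomp, L.iteratedFDeriv_comp_right hf1 x (mod_cast le_top)]
  refine le_trans (ContinuousMultilinearMap.norm_compContinuousLinearMap_le _ _) ?_
  have h1 : ‖iteratedFDeriv ℝ n f1 (L x)‖ = ‖iteratedFDeriv ℝ n f (s • x + a)‖ := by
    have hLx : L x = s • x := rfl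
    rw [hf1def, my_iteratedFDeriv_comp_add f hf a n (L x), hLx]
  rw [h1, Finset.prod_const, Finset.card_univ, Fintype.card_fin, mul_comm]
  exact mul_le_mul_of_nonneg_right (pow_le_pow_left₀ (norm_nonneg L) hLnorm n) (norm_nonneg _)

lemma my_norm_iteratedFDeriv_sub_le (f : E → F) (hf : ContDiff ℝ (⊤ : ℕ∞) f) (n : ℕ) (C : ℝ)
    (hC : ∀ z, ‖iteratedFDeriv ℝ (n + 1) f z‖ ≤ C) (x y : E) :
    ‖iteratedFDeriv ℝ n f x - iteratedFDeriv ℝ n f y‖ ≤ C * ‖x - y‖ := by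
  have := Convex.norm_image_sub_le_of_norm_fderiv_le
    (f := iteratedFDeriv ℝ n f) (s := Set.univ)
    (fun z _ => hf.differentiable_iteratedFDeriv (m := n) (mod_cast WithTop.coe_lt_top _) z)
    (fun z _ => by rw [norm_fderiv_iteratedFDeriv]; exact hC z)
    convex_univ (Set.mem_univ y) (Set.mem_univ x)
  simpa using this

lemma my_exists_uniform_bound (f : E → F) (hf : ContDiff ℝ (⊤ : ℕ∞) f) (hsupp : HasCompactSupport f)
    (N : ℕ) : ∃ B : ℝ, 1 ≤ B ∧ ∀ i ≤ N, ∀ x, ‖iteratedFDeriv ℝ i f x‖ ≤ B := by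
  induction N with
  | zero =>
    obtain ⟨C, hC⟩ := (hsupp.iteratedFDeriv 0).exists_bound_of_continuous
      (hf.continuous_iteratedFDeriv (mod_cast le_top))
    exact ⟨max 1 C, le_max_left _ _, fun i hi x => by
      rw [Nat.le_zero.mp hi]; exact (hC x).trans (le_max_right _ _)⟩
  | succ N IH =>
    obtain ⟨B, hB1, hB⟩ := IH
    obtain ⟨C, hC⟩ := (hsupp.iteratedFDeriv (N + 1)).exists_bound_of_continuous
      (hf.continuous_iteratedFDeriv (mod_cast le_top))
    refine ⟨max B C, le_trans hB1 (le_max_left _ _), fun i hi x => ?_⟩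
    rcases Nat.lt_succ_iff_lt_or_eq.mp (Nat.lt_succ_of_le hi) with h | h
    · exact (hB i (Nat.lt_succ_iff.mp h) x).trans (le_max_left _ _)
    · rw [h]; exact (hC x).trans (le_max_right _ _)

lemma nat_cast_abs_sub_ge_one {a b : ℕ} (hab : a ≠ b) : (1 : ℝ) ≤ |(a : ℝ) - b| := by
  have h0 : ((a : ℤ) - b) ≠ 0 := sub_ne_zero.mpr (by exact_mod_cast hab)
  have h1 : (1 : ℤ) ≤ |(a : ℤ) - b| := Int.one_le_abs h0
  have : ((|(a : ℤ) - b| : ℤ) : ℝ) = |(a : ℝ) - b| := by push_cast; rfl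
  rw [← this]; exact_mod_cast h1

end Aux

section Grid

variable {E : Type*} [NormedAddCommGroup E] [NormedSpace ℝ E]
variable {V : Type*} {h : ℝ} {c : V → E} {g : V → E → ℝ}

lemma my_sum_dichotomy (hh : 0 < h)
    (hsep : ∀ v w : V, v ≠ w → 3 * h ≤ dist (c v) (c w))
    (hg_supp : ∀ v, tsupport (g v) ⊆ Metric.closedBall (c v) h)
    (S : Finset V) (x : E) :
    ((∀ v ∈ S, h < dist x (c v)) ∧
      ∀ n : ℕ, iteratedFDeriv ℝ n (fun y => ∑ v ∈ S, g v y) x = 0) ∨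
    (∃ a ∈ S, dist x (c a) ≤ h ∧
      ∀ n : ℕ, iteratedFDeriv ℝ n (fun y => ∑ v ∈ S, g v y) x =
        iteratedFDeriv ℝ n (g a) x) := by
  classical
  by_cases hx : ∃ a ∈ S, dist x (c a) ≤ h
  · obtain ⟨a, haS, hxa⟩ := hx
    right
    refine ⟨a, haS, hxa, fun n => ?_⟩
    have hev : (fun y => ∑ v ∈ S, g v y) =ᶠ[nhds x] g a := by
      filter_upwards [Metric.ball_mem_nhds x hh] with y hy
      refine Finset.sum_eq_single_of_mem a haS (fun v hvS hva => ?_)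
      apply image_eq_zero_of_notMem_tsupport
      intro hmem
      have h1 : dist y (c v) ≤ h := Metric.mem_closedBall.mp (hg_supp v hmem)
      have h2 : 3 * h ≤ dist (c a) (c v) := hsep a v (Ne.symm hva)
      have h3 : dist y x < h := Metric.mem_ball.mp hy
      have h4 : dist (c a) (c v) ≤ dist (c a) x + dist x y + dist y (c v) :=
        dist_triangle4 _ _ _ _
      rw [dist_comm (c a) x, dist_comm x y] at h4
      linarith
    exact my_eventuallyEq_iteratedFDeriv_eq hev n
  · push_neg at hx
    left
    refine ⟨hx, fun n => ?_⟩
    have hev : (fun y => ∑ v ∈ S, g v y) =ᶠ[nhds x] (fun _ => (0 : ℝ)) := by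
      have hall : ∀ v ∈ S, ∀ᶠ y in nhds x, g v y = 0 := by
        intro v hv
        have hopen : IsOpen (Metric.closedBall (c v) h)ᶜ := Metric.isClosed_closedBall.isOpen_compl
        have hmem : x ∈ (Metric.closedBall (c v) h)ᶜ := by
          simp only [Set.mem_compl_iff, Metric.mem_closedBall]
          exact not_le.mpr (hx v hv)
        filter_upwards [hopen.mem_nhds hmem] with y hy
        exact image_eq_zero_of_notMem_tsupport (fun hmem' => hy (hg_supp v hmem'))
      filter_upwards [(Filter.eventually_all_finset S).mpr hall] with y hy
      exact Finset.sum_eq_zero hy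
    rw [my_eventuallyEq_iteratedFDeriv_eq hev n]
    rw [iteratedFDeriv_zero_fun]
    rfl

lemma my_sum_value (hh : 0 < h)
    (hsep : ∀ v w : V, v ≠ w → 3 * h ≤ dist (c v) (c w))
    (hg_supp : ∀ v, tsupport (g v) ⊆ Metric.closedBall (c v) h)
    (S : Finset V) (x : E) :
    (∑ v ∈ S, g v x) = 0 ∨ ∃ a ∈ S, dist x (c a) ≤ h ∧ (∑ v ∈ S, g v x) = g a x := by
  rcases my_sum_dichotomy hh hsep hg_supp S x with ⟨_, hn⟩ | ⟨a, haS, hxa, hn⟩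
  · left
    have h0 := hn 0
    calc (∑ v ∈ S, g v x) = iteratedFDeriv ℝ 0 (fun y => ∑ v ∈ S, g v y) x (fun _ => 0) :=
          (iteratedFDeriv_zero_apply (f := fun y => ∑ v ∈ S, g v y) (x := x) _).symm
      _ = (0 : ContinuousMultilinearMap ℝ (fun _ : Fin 0 => E) ℝ) (fun _ => 0) := by rw [h0]
      _ = 0 := rfl
  · right
    refine ⟨a, haS, hxa, ?_⟩
    have h0 := hn 0
    calc (∑ v ∈ S, g v x) = iteratedFDeriv ℝ 0 (fun y => ∑ v ∈ S, g v y) x (fun _ => 0) :=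
          (iteratedFDeriv_zero_apply (f := fun y => ∑ v ∈ S, g v y) (x := x) _).symm
      _ = iteratedFDeriv ℝ 0 (g a) x (fun _ => 0) := by rw [h0]
      _ = g a x := iteratedFDeriv_zero_apply _

end Grid

set_option maxHeartbeats 2000000 in
/-- Kolmogorov's lower bound on the metric entropy of balls of nonnegative functions
in Hölder classes: there is `μ > 0` such that for any `β > 0` and `θ ∈ (0, μβ)`, the set
`X_{qθβ} = {f ∈ C₀^q(K) : ‖f‖_∞ ≤ θ, ‖f‖_{C^q} ≤ β, f ≥ 0}` contains a
`θ`-distinguishable (in `L^∞`) subset `Z` with `|Z| ≥ exp(2^{-d-1}(μβ/θ)^{d/q})`. -/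
theorem kolmogorov_entropy_lower_bound (d : ℕ) (hd : 2 ≤ d) (q : ℝ) (hq : 0 < q)
    (x₀ : EuclideanSpace ℝ (Fin d)) (r : ℝ) (hr : 0 < r) :
    ∃ μ > (0 : ℝ), ∀ β : ℝ, 0 < β → ∀ θ : ℝ, 0 < θ → θ < μ * β →
      ∃ Z : Set (EuclideanSpace ℝ (Fin d) → ℝ),
        Z.Finite ∧
        (∀ f ∈ Z, ContDiff ℝ (⌊q⌋₊ : ℕ∞) f ∧
          tsupport f ⊆ Metric.closedBall x₀ r ∧
          (∀ x, |f x| ≤ θ) ∧ cqNorm d q f ≤ β ∧ (∀ x, 0 ≤ f x)) ∧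
        (∀ f ∈ Z, ∀ g ∈ Z, f ≠ g →
          θ ≤ ⨆ x : EuclideanSpace ℝ (Fin d), |f x - g x|) ∧
        Real.exp (2 ^ (-(d : ℝ) - 1) * (μ * β / θ) ^ ((d : ℝ) / q)) ≤ Z.ncard := by
  classical
  set k := ⌊q⌋₊ with hkdef
  have hkq : (k : ℝ) ≤ q := Nat.floor_le hq.le
  have hqk1 : q < (k : ℝ) + 1 := by exact_mod_cast Nat.lt_floor_add_one q
  set sd := Real.sqrt d with hsddef
  have hsd1 : (1:ℝ) ≤ sd := Real.one_le_sqrt.mpr (by exact_mod_cast le_trans one_le_two hd)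
  have hsd0 : (0:ℝ) < sd := lt_of_lt_of_le one_pos hsd1
  set φ : ContDiffBump (0 : EuclideanSpace ℝ (Fin d)) := ⟨1/2, 1, by norm_num, by norm_num⟩
    with hφdef
  have hφs : ContDiff ℝ (⊤ : ℕ∞) ⇑φ := φ.contDiff
  obtain ⟨B, hB1, hB⟩ := my_exists_uniform_bound (⇑φ) hφs φ.hasCompactSupport (k+1)
  set M := 3 * B with hMdef
  have hM0 : (0:ℝ) < M := by rw [hMdef]; linarith
  set ρ := min 1 (r / (8 * sd)) with hρdef
  have hρ0 : (0:ℝ) < ρ := lt_min one_pos (by positivity)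
  have hρ1 : ρ ≤ 1 := min_le_left _ _
  have hρr : ρ ≤ r / (8 * sd) := min_le_right _ _
  refine ⟨ρ ^ q / M, by positivity, ?_⟩
  intro β hβ θ hθ hθμ
  set h := (M * θ / β) ^ (1/q) with hhdef
  have hMθβ : (0:ℝ) < M * θ / β := by positivity
  have hh0 : 0 < h := Real.rpow_pos_of_pos hMθβ _
  have hhq : h ^ q = M * θ / β := by
    rw [hhdef, ← Real.rpow_mul hMθβ.le, one_div, inv_mul_cancel₀ hq.ne', Real.rpow_one]
  have hhρ : h < ρ := by
    have h1 : M * θ / β < ρ ^ q := by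
      rw [div_lt_iff₀ hβ]
      calc M * θ < M * (ρ ^ q / M * β) := by
            exact mul_lt_mul_of_pos_left hθμ hM0
        _ = ρ ^ q * β := by field_simp
    calc h = (M * θ / β) ^ (1/q) := rfl
      _ < (ρ ^ q) ^ (1/q) := Real.rpow_lt_rpow hMθβ.le h1 (by positivity)
      _ = ρ := by
          rw [← Real.rpow_mul hρ0.le, mul_one_div, div_self hq.ne', Real.rpow_one]
  have hh1 : h ≤ 1 := le_trans hhρ.le hρ1
  have hhr : h ≤ r / (8 * sd) := le_trans hhρ.le hρr
  have hhr' : h * (8 * sd) ≤ r := by rwa [← le_div_iff₀ (by positivity)]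
  set t := r / (4 * h * sd) with htdef
  have ht2 : 2 ≤ t := by
    rw [htdef, le_div_iff₀ (by positivity)]
    nlinarith
  set m := ⌊t⌋₊ with hmdef
  have hmt : (m:ℝ) ≤ t := Nat.floor_le (by linarith)
  have hm2 : t/2 ≤ (m:ℝ) := by
    have := Nat.sub_one_lt_floor t
    rw [← hmdef] at this
    linarith
  have hm0 : (0:ℝ) < (m:ℝ) := by linarith
  -- grid points
  set vec : (Fin d → Fin m) → EuclideanSpace ℝ (Fin d) :=
    fun v => (EuclideanSpace.equiv (Fin d) ℝ).symm (fun i => (v i : ℝ)) with hvecdef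
  have hvec_apply : ∀ v i, vec v i = (v i : ℝ) := fun v i => rfl
  have hsub_apply : ∀ v w i, (vec v - vec w) i = (v i : ℝ) - (w i : ℝ) := fun v w i => rfl
  have hvec_sep : ∀ v w, v ≠ w → (1:ℝ) ≤ ‖vec v - vec w‖ := by
    intro v w hvw
    obtain ⟨i, hi⟩ := Function.ne_iff.mp hvw
    rw [EuclideanSpace.norm_eq]
    rw [Real.one_le_sqrt]
    have h2 : ‖(vec v - vec w) i‖ = |(v i : ℝ) - (w i : ℝ)| := by
      rw [hsub_apply v w i, Real.norm_eq_abs]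
    have h1 : (1:ℝ) ≤ |(v i : ℝ) - (w i : ℝ)| :=
      nat_cast_abs_sub_ge_one (fun hc => hi (Fin.val_injective hc))
    calc (1:ℝ) ≤ ‖(vec v - vec w) i‖ ^ 2 := by rw [h2]; nlinarith [abs_nonneg ((v i : ℝ) - (w i : ℝ))]
      _ ≤ ∑ j, ‖(vec v - vec w) j‖ ^ 2 :=
          Finset.single_le_sum (f := fun j => ‖(vec v - vec w) j‖ ^ 2) (fun j _ => sq_nonneg _) (Finset.mem_univ i)
  have hvec_norm : ∀ v, ‖vec v‖ ≤ sd * m := by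
    intro v
    rw [EuclideanSpace.norm_eq]
    have hterm : ∀ j, ‖vec v j‖ ^ 2 ≤ (m:ℝ)^2 := by
      intro j
      rw [hvec_apply, Real.norm_eq_abs, sq_abs]
      have h1 : ((v j : ℕ) : ℝ) ≤ (m:ℝ) := by exact_mod_cast (v j).isLt.le
      nlinarith [Nat.cast_nonneg (α := ℝ) (v j : ℕ)]
    calc Real.sqrt (∑ j, ‖vec v j‖ ^ 2) ≤ Real.sqrt (∑ _j : Fin d, (m:ℝ)^2) :=
          Real.sqrt_le_sqrt (Finset.sum_le_sum (fun j _ => hterm j))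
      _ = Real.sqrt ((d:ℝ) * (m:ℝ)^2) := by
          rw [Finset.sum_const, Finset.card_univ, Fintype.card_fin, nsmul_eq_mul]
      _ = sd * m := by
          rw [Real.sqrt_mul (by positivity), Real.sqrt_sq (by positivity), hsddef]
  set c : (Fin d → Fin m) → EuclideanSpace ℝ (Fin d) :=
    fun v => x₀ + (3*h) • vec v with hcdef
  have hc_sub : ∀ v w, c v - c w = (3*h) • (vec v - vec w) := by
    intro v w
    calc c v - c w = (3*h) • vec v - (3*h) • vec w := add_sub_add_left_eq_sub _ _ _
      _ = (3*h) • (vec v - vec w) := (smul_sub _ _ _).symm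
  have hsep : ∀ v w, v ≠ w → 3*h ≤ dist (c v) (c w) := by
    intro v w hvw
    rw [dist_eq_norm, hc_sub, norm_smul, Real.norm_eq_abs, abs_of_pos (by positivity)]
    nlinarith [hvec_sep v w hvw]
  have hc_x₀ : ∀ v, dist (c v) x₀ ≤ 3*h*(sd*m) := by
    intro v
    rw [dist_eq_norm, hcdef]
    rw [add_sub_cancel_left, norm_smul, Real.norm_eq_abs, abs_of_pos (by positivity)]
    exact mul_le_mul_of_nonneg_left (hvec_norm v) (by positivity)
  have hhsdt : h * sd * t = r / 4 := by rw [htdef]; field_simp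
  have hc_ball : ∀ v, Metric.closedBall (c v) h ⊆ Metric.closedBall x₀ r := by
    intro v z hz
    rw [Metric.mem_closedBall] at hz ⊢
    have h1 : dist z x₀ ≤ dist z (c v) + dist (c v) x₀ := dist_triangle _ _ _
    have h2 : 3*h*(sd*m) ≤ 3*h*(sd*t) := by nlinarith
    have h3 : h ≤ r/8 := by nlinarith
    nlinarith [hc_x₀ v]
  -- bump functions
  set g : (Fin d → Fin m) → EuclideanSpace ℝ (Fin d) → ℝ :=
    fun v x => θ • φ (h⁻¹ • (x - c v)) with hgdef
  have hg_eq : ∀ v, g v = fun x => θ • φ (h⁻¹ • x + (-(h⁻¹ • c v))) := by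
    intro v; funext x
    show θ • φ (h⁻¹ • (x - c v)) = θ • φ (h⁻¹ • x + (-(h⁻¹ • c v)))
    rw [smul_sub, sub_eq_add_neg]
  have hinner : ∀ v, ContDiff ℝ (⊤ : ℕ∞)
      (fun x : EuclideanSpace ℝ (Fin d) => h⁻¹ • x + (-(h⁻¹ • c v))) :=
    fun v => (contDiff_id.const_smul h⁻¹).add contDiff_const
  have hg_smooth : ∀ v, ContDiff ℝ (⊤ : ℕ∞) (g v) := by
    intro v
    rw [hg_eq v]
    exact (hφs.comp (hinner v)).const_smul θ
  have hg_supp : ∀ v, tsupport (g v) ⊆ Metric.closedBall (c v) h := by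
    intro v
    refine closure_minimal ?_ Metric.isClosed_closedBall
    intro x hx
    have hx' : θ • φ (h⁻¹ • (x - c v)) ≠ 0 := hx
    have hφne : φ (h⁻¹ • (x - c v)) ≠ 0 := fun h0 => hx' (by rw [h0, smul_zero])
    have hmem : h⁻¹ • (x - c v) ∈ Metric.ball (0 : EuclideanSpace ℝ (Fin d)) φ.rOut := by
      rw [← φ.support_eq]; exact hφne
    rw [mem_ball_zero_iff] at hmem
    have hout : φ.rOut = 1 := rfl
    rw [hout, norm_smul, Real.norm_eq_abs, abs_of_pos (inv_pos.mpr hh0)] at hmem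
    rw [Metric.mem_closedBall, dist_eq_norm]
    have := (inv_mul_lt_iff₀ hh0).mp hmem
    linarith
  have hg_nonneg : ∀ v x, 0 ≤ g v x := fun v x => smul_nonneg hθ.le φ.nonneg
  have hg_le : ∀ v x, g v x ≤ θ := by
    intro v x
    have h1 : φ (h⁻¹ • (x - c v)) ≤ 1 := φ.le_one
    have h2 : g v x = θ * φ (h⁻¹ • (x - c v)) := rfl
    nlinarith
  have hg_center : ∀ v, g v (c v) = θ := by
    intro v
    have h2 : g v (c v) = θ * φ (h⁻¹ • (c v - c v)) := rfl
    rw [h2, sub_self, smul_zero, φ.one_of_mem_closedBall (Metric.mem_closedBall_self φ.rIn_pos.le),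
      mul_one]
  have hg_deriv : ∀ v, ∀ i ≤ k + 1, ∀ x, ‖iteratedFDeriv ℝ i (g v) x‖ ≤ θ * B * h ^ (-(i:ℝ)) := by
    intro v i hi x
    rw [hg_eq v]
    have hcompsm : ContDiff ℝ ((i:ℕ∞) : WithTop ℕ∞)
        (fun x : EuclideanSpace ℝ (Fin d) => φ (h⁻¹ • x + (-(h⁻¹ • c v)))) :=
      (hφs.comp (hinner v)).of_le (mod_cast le_top)
    rw [iteratedFDeriv_const_smul_apply' hcompsm.contDiffAt]
    rw [norm_smul, Real.norm_eq_abs, abs_of_pos hθ]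
    have hstep := my_norm_iteratedFDeriv_comp_smul_add (⇑φ) hφs h⁻¹ (-(h⁻¹ • c v)) i x
    calc θ * ‖iteratedFDeriv ℝ i (fun y => φ (h⁻¹ • y + (-(h⁻¹ • c v)))) x‖
        ≤ θ * (|h⁻¹| ^ i * ‖iteratedFDeriv ℝ i (⇑φ) (h⁻¹ • x + (-(h⁻¹ • c v)))‖) :=
          mul_le_mul_of_nonneg_left hstep hθ.le
      _ ≤ θ * (h ^ (-(i:ℝ)) * B) := by
          have h1 : |h⁻¹| ^ i = h ^ (-(i:ℝ)) := by
            rw [abs_of_pos (inv_pos.mpr hh0), Real.rpow_neg hh0.le, Real.rpow_natCast, inv_pow]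
          rw [h1]
          exact mul_le_mul_of_nonneg_left
            (mul_le_mul_of_nonneg_left (hB i hi _) (Real.rpow_nonneg hh0.le _)) hθ.le
      _ = θ * B * h ^ (-(i:ℝ)) := by ring
  -- far-case arithmetic
  have hfar : ∀ u : ℝ, h ≤ u →
      θ * B * h ^ (-((k:ℝ))) + θ * B * h ^ (-((k:ℝ))) ≤
        2 * (θ * B * h ^ (-q)) * u ^ (q - (k:ℝ)) := by
    intro u hu
    have e1 : h ^ (-((k:ℝ))) = h ^ (-q) * h ^ (q - (k:ℝ)) := by
      rw [← Real.rpow_add hh0]; congr 1; ring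
    have e2 : h ^ (q - (k:ℝ)) ≤ u ^ (q - (k:ℝ)) :=
      Real.rpow_le_rpow hh0.le hu (by linarith)
    have e3 : (0:ℝ) ≤ θ * B * h ^ (-q) := by positivity
    calc θ * B * h ^ (-((k:ℝ))) + θ * B * h ^ (-((k:ℝ)))
        = 2 * (θ * B * h ^ (-q)) * h ^ (q - (k:ℝ)) := by rw [e1]; ring
      _ ≤ 2 * (θ * B * h ^ (-q)) * u ^ (q - (k:ℝ)) := by
          exact mul_le_mul_of_nonneg_left e2 (by positivity)
  have hg_holder : ∀ v x y, ‖iteratedFDeriv ℝ k (g v) x - iteratedFDeriv ℝ k (g v) y‖ ≤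
      2 * (θ * B * h ^ (-q)) * ‖x - y‖ ^ (q - (k:ℝ)) := by
    intro v x y
    by_cases hxy : x = y
    · subst hxy
      simp only [sub_self, norm_zero]
      positivity
    have hu0 : (0:ℝ) < ‖x - y‖ := by rw [norm_pos_iff]; exact sub_ne_zero.mpr hxy
    rcases le_or_gt ‖x - y‖ h with hcase | hcase
    · -- Lipschitz case
      have hlip := my_norm_iteratedFDeriv_sub_le (g v) (hg_smooth v) k (θ * B * h ^ (-((k:ℝ)+1)))
        (fun z => by
          have := hg_deriv v (k+1) le_rfl z
          rwa [Nat.cast_add, Nat.cast_one] at this) x y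
      refine hlip.trans ?_
      set u := ‖x - y‖ with hudef
      set A := q - (k:ℝ) with hAdef
      have k1 : u = u ^ A * u ^ (1 - A) := by
        rw [← Real.rpow_add hu0, show A + (1 - A) = 1 by ring, Real.rpow_one]
      have k2 : u ^ (1 - A) ≤ h ^ (1 - A) :=
        Real.rpow_le_rpow hu0.le hcase (by rw [hAdef]; linarith)
      have k3 : h ^ (-((k:ℝ)+1)) * h ^ (1 - A) = h ^ (-q) := by
        rw [← Real.rpow_add hh0]; congr 1; rw [hAdef]; ring
      have t1 : h ^ (-((k:ℝ)+1)) * u ≤ h ^ (-q) * u ^ A := by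
        calc h ^ (-((k:ℝ)+1)) * u = (h ^ (-((k:ℝ)+1)) * u ^ (1 - A)) * u ^ A := by
              rw [mul_assoc, mul_comm (u ^ (1-A)) (u ^ A), ← k1]
          _ ≤ (h ^ (-((k:ℝ)+1)) * h ^ (1 - A)) * u ^ A := by
              refine mul_le_mul_of_nonneg_right (mul_le_mul_of_nonneg_left k2 ?_)
                (Real.rpow_nonneg hu0.le _)
              exact Real.rpow_nonneg hh0.le _
          _ = h ^ (-q) * u ^ A := by rw [k3]
      have e : (0:ℝ) ≤ θ * B := by positivity
      calc θ * B * h ^ (-((k:ℝ)+1)) * u = (θ * B) * (h ^ (-((k:ℝ)+1)) * u) := by ring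
        _ ≤ (θ * B) * (h ^ (-q) * u ^ A) := mul_le_mul_of_nonneg_left t1 e
        _ ≤ 2 * (θ * B * h ^ (-q)) * u ^ A := by
            have : (0:ℝ) ≤ (θ * B) * (h ^ (-q) * u ^ A) := by positivity
            nlinarith
    · -- far case
      calc ‖iteratedFDeriv ℝ k (g v) x - iteratedFDeriv ℝ k (g v) y‖
          ≤ ‖iteratedFDeriv ℝ k (g v) x‖ + ‖iteratedFDeriv ℝ k (g v) y‖ := norm_sub_le _ _
        _ ≤ θ * B * h ^ (-((k:ℝ))) + θ * B * h ^ (-((k:ℝ))) :=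
            add_le_add (hg_deriv v k (Nat.le_succ k) x) (hg_deriv v k (Nat.le_succ k) y)
        _ ≤ 2 * (θ * B * h ^ (-q)) * ‖x - y‖ ^ (q - (k:ℝ)) := hfar _ hcase.le
  have hg_zero : ∀ v z, ¬ dist z (c v) ≤ h → iteratedFDeriv ℝ k (g v) z = 0 := by
    intro v z hz
    apply image_eq_zero_of_notMem_tsupport
    intro hmem
    exact hz (Metric.mem_closedBall.mp (hg_supp v (tsupport_iteratedFDeriv_subset k hmem)))
  have hdich := my_sum_dichotomy hh0 hsep hg_supp
  have hval := my_sum_value hh0 hsep hg_supp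
  set F : Finset (Fin d → Fin m) → EuclideanSpace ℝ (Fin d) → ℝ :=
    fun S x => ∑ v ∈ S, g v x with hFdef
  have hF_smooth : ∀ S, ContDiff ℝ (⊤ : ℕ∞) (F S) :=
    fun S => ContDiff.sum (fun v _ => hg_smooth v)
  have hF_nonneg : ∀ S x, 0 ≤ F S x := fun S x => Finset.sum_nonneg (fun v _ => hg_nonneg v x)
  have hF_le : ∀ S x, F S x ≤ θ := by
    intro S x
    rcases hval S x with h0 | ⟨a, _, _, ha⟩
    · simp only [hFdef]; rw [h0]; exact hθ.le
    · simp only [hFdef]; rw [ha]; exact hg_le a x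
  have hF_abs : ∀ S x, |F S x| ≤ θ := fun S x => by
    rw [abs_of_nonneg (hF_nonneg S x)]; exact hF_le S x
  have hF_supp : ∀ S, tsupport (F S) ⊆ Metric.closedBall x₀ r := by
    intro S
    refine closure_minimal ?_ Metric.isClosed_closedBall
    intro x hx
    obtain ⟨v, hvS, hvx⟩ := Finset.exists_ne_zero_of_sum_ne_zero hx
    exact hc_ball v (hg_supp v (subset_closure hvx))
  have hF_deriv : ∀ S, ∀ i ≤ k, ∀ x, ‖iteratedFDeriv ℝ i (F S) x‖ ≤ θ * B * h ^ (-q) := by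
    intro S i hi x
    have hiq : (i:ℝ) ≤ q := le_trans (by exact_mod_cast hi) hkq
    have hmono : h ^ (-(i:ℝ)) ≤ h ^ (-q) :=
      Real.rpow_le_rpow_of_exponent_ge hh0 hh1 (by linarith)
    rcases hdich S x with ⟨_, hn⟩ | ⟨a, haS, hxa, hn⟩
    · simp only [hFdef]; rw [hn i, norm_zero]; positivity
    · simp only [hFdef]; rw [hn i]
      refine (hg_deriv a i (le_trans hi (Nat.le_succ k)) x).trans ?_
      exact mul_le_mul_of_nonneg_left hmono (by positivity)
  have hF_holder : ∀ S x y, ‖iteratedFDeriv ℝ k (F S) x - iteratedFDeriv ℝ k (F S) y‖ ≤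
      2 * (θ * B * h ^ (-q)) * ‖x - y‖ ^ (q - (k:ℝ)) := by
    intro S x y
    have hrhs : (0:ℝ) ≤ 2 * (θ * B * h ^ (-q)) * ‖x - y‖ ^ (q - (k:ℝ)) := by positivity
    rcases hdich S x with ⟨hx0, hxn⟩ | ⟨a, haS, hxa, hxn⟩ <;>
      rcases hdich S y with ⟨hy0, hyn⟩ | ⟨b, hbS, hyb, hyn⟩
    · simp only [hFdef]; rw [hxn k, hyn k, sub_self, norm_zero]; exact hrhs
    · simp only [hFdef]; rw [hxn k, hyn k]
      rw [show (0 : ContinuousMultilinearMap ℝ (fun _ : Fin k => EuclideanSpace ℝ (Fin d)) ℝ) =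
        iteratedFDeriv ℝ k (g b) x from (hg_zero b x (not_le.mpr (hx0 b hbS))).symm]
      exact hg_holder b x y
    · simp only [hFdef]; rw [hxn k, hyn k]
      rw [show (0 : ContinuousMultilinearMap ℝ (fun _ : Fin k => EuclideanSpace ℝ (Fin d)) ℝ) =
        iteratedFDeriv ℝ k (g a) y from (hg_zero a y (not_le.mpr (hy0 a haS))).symm]
      exact hg_holder a x y
    · by_cases hab : a = b
      · subst hab
        simp only [hFdef]; rw [hxn k, hyn k]
        exact hg_holder a x y
      · simp only [hFdef]; rw [hxn k, hyn k]
        have hdxy : h ≤ ‖x - y‖ := by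
          have h1 := hsep a b hab
          have h2 : dist (c a) (c b) ≤ dist (c a) x + dist x y + dist y (c b) :=
            dist_triangle4 _ _ _ _
          rw [dist_comm (c a) x] at h2
          rw [← dist_eq_norm]
          linarith
        calc ‖iteratedFDeriv ℝ k (g a) x - iteratedFDeriv ℝ k (g b) y‖
            ≤ ‖iteratedFDeriv ℝ k (g a) x‖ + ‖iteratedFDeriv ℝ k (g b) y‖ := norm_sub_le _ _
          _ ≤ θ * B * h ^ (-((k:ℝ))) + θ * B * h ^ (-((k:ℝ))) :=
              add_le_add (hg_deriv a k (Nat.le_succ k) x) (hg_deriv b k (Nat.le_succ k) y)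
          _ ≤ 2 * (θ * B * h ^ (-q)) * ‖x - y‖ ^ (q - (k:ℝ)) := hfar _ hdxy
  have hβeq : θ * B * h ^ (-q) + 2 * (θ * B * h ^ (-q)) = β := by
    have h2 : h ^ (-q) = β / (M * θ) := by
      rw [Real.rpow_neg hh0.le, hhq, inv_div]
    rw [h2, hMdef]
    field_simp
    ring
  have hcq : ∀ S, cqNorm d q (F S) ≤ β := by
    intro S
    unfold cqNorm
    rw [← hkdef]
    refine le_trans (add_le_add
      (ciSup_le fun i => ciSup_le fun x => hF_deriv S i (Nat.lt_succ_iff.mp i.isLt) x)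
      (ciSup_le fun p => ?_)) (le_of_eq hβeq)
    split_ifs with hp
    · positivity
    · have hu0 : (0:ℝ) < ‖p.1 - p.2‖ := by rw [norm_pos_iff]; exact sub_ne_zero.mpr hp
      have hupos : (0:ℝ) < ‖p.1 - p.2‖ ^ (q - (k:ℝ)) := Real.rpow_pos_of_pos hu0 _
      rw [div_le_iff₀ hupos]
      exact hF_holder S p.1 p.2
  -- values at grid points
  have hFval : ∀ S v, F S (c v) = if v ∈ S then θ else 0 := by
    intro S v
    have hzero : ∀ w, w ≠ v → g w (c v) = 0 := by
      intro w hwv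
      apply image_eq_zero_of_notMem_tsupport
      intro hmem
      have h1 : dist (c v) (c w) ≤ h := Metric.mem_closedBall.mp (hg_supp w hmem)
      have h2 := hsep v w (fun hvw => hwv (hvw.symm))
      linarith
    by_cases hvS : v ∈ S
    · rw [if_pos hvS]
      show (∑ w ∈ S, g w (c v)) = θ
      rw [Finset.sum_eq_single_of_mem v hvS (fun w _ hwv => hzero w hwv)]
      exact hg_center v
    · rw [if_neg hvS]
      show (∑ w ∈ S, g w (c v)) = 0
      exact Finset.sum_eq_zero (fun w hwS => hzero w (fun hwv => hvS (hwv ▸ hwS)))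
  have hFinj : Function.Injective F := by
    intro S T hST
    ext v
    have hv := congrFun hST (c v)
    rw [hFval S v, hFval T v] at hv
    by_cases h1 : v ∈ S <;> by_cases h2 : v ∈ T
    · simp [h1, h2]
    · rw [if_pos h1, if_neg h2] at hv
      exact absurd hv hθ.ne'
    · rw [if_neg h1, if_pos h2] at hv
      exact absurd hv.symm hθ.ne'
    · simp [h1, h2]
  refine ⟨Set.range F, Set.finite_range F, ?_, ?_, ?_⟩
  · rintro f ⟨S, rfl⟩
    exact ⟨(hF_smooth S).of_le (mod_cast le_top), hF_supp S, hF_abs S, hcq S, hF_nonneg S⟩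
  · rintro f ⟨S, rfl⟩ g' ⟨T, rfl⟩ hfg
    have hST : S ≠ T := fun hST => hfg (by rw [hST])
    obtain ⟨v, hv⟩ := not_forall.mp (fun hall => hST (Finset.ext_iff.mpr hall))
    have hbdd : BddAbove (Set.range fun x => |F S x - F T x|) := by
      refine ⟨2 * θ, ?_⟩
      rintro _ ⟨x, rfl⟩
      calc |F S x - F T x| ≤ |F S x| + |F T x| := abs_sub _ _
        _ ≤ θ + θ := add_le_add (hF_abs S x) (hF_abs T x)
        _ = 2 * θ := by ring
    have hvval : |F S (c v) - F T (c v)| = θ := by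
      rw [hFval S v, hFval T v]
      by_cases h1 : v ∈ S <;> by_cases h2 : v ∈ T
      · exact absurd (iff_of_true h1 h2) hv
      · rw [if_pos h1, if_neg h2, sub_zero, abs_of_nonneg hθ.le]
      · rw [if_neg h1, if_pos h2, zero_sub, abs_neg, abs_of_nonneg hθ.le]
      · exact absurd (iff_of_false h1 h2) hv
    exact le_ciSup_of_le hbdd (c v) (le_of_eq hvval.symm)
  · -- cardinality bound
    have hcard : (Set.range F).ncard = 2 ^ (m ^ d) := by
      rw [← Set.image_univ, Set.ncard_image_of_injective _ hFinj, Set.ncard_univ,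
        Nat.card_eq_fintype_card, Fintype.card_finset, Fintype.card_fun, Fintype.card_fin,
        Fintype.card_fin]
    rw [hcard]
    have hμβθ : ρ ^ q / M * β / θ = (ρ / h) ^ q := by
      rw [Real.div_rpow hρ0.le hh0.le, hhq]
      field_simp
    rw [hμβθ]
    have h2 : ((ρ / h) ^ q) ^ ((d:ℝ) / q) = (ρ / h) ^ (d:ℕ) := by
      rw [← Real.rpow_natCast (ρ / h) d, ← Real.rpow_mul (by positivity)]
      congr 1
      field_simp
    rw [h2]
    have h3 : (2:ℝ) ^ (-(d:ℝ) - 1) ≤ 1/8 := by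
      have e1 : (2:ℝ) ^ (-(d:ℝ) - 1) ≤ (2:ℝ) ^ (-3:ℝ) := by
        refine Real.rpow_le_rpow_of_exponent_le one_le_two ?_
        have : (2:ℝ) ≤ (d:ℝ) := by exact_mod_cast hd
        linarith
      refine e1.trans (le_of_eq ?_)
      rw [show (-3:ℝ) = -((3:ℕ):ℝ) by norm_num, Real.rpow_neg (by norm_num : (0:ℝ) ≤ 2),
        Real.rpow_natCast]
      norm_num
    have hρhm : ρ / h ≤ (m:ℝ) := by
      rw [div_le_iff₀ hh0]
      have e2 : r / (8 * sd) = t / 2 * h := by rw [htdef]; field_simp; ring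
      have e3 : t / 2 * h ≤ (m:ℝ) * h := mul_le_mul_of_nonneg_right hm2 hh0.le
      calc ρ ≤ r / (8 * sd) := hρr
        _ = t / 2 * h := e2
        _ ≤ (m:ℝ) * h := e3
    have h4 : (ρ / h) ^ (d:ℕ) ≤ (m:ℝ) ^ (d:ℕ) := pow_le_pow_left₀ (by positivity) hρhm d
    have hlog : (1/8 : ℝ) ≤ Real.log 2 := by
      have := Real.log_two_gt_d9
      linarith
    have hN : (2:ℝ) ^ (-(d:ℝ) - 1) * (ρ / h) ^ (d:ℕ) ≤ Real.log 2 * (m:ℝ) ^ (d:ℕ) :=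
      mul_le_mul (h3.trans hlog) h4 (by positivity) (Real.log_nonneg one_le_two)
    calc Real.exp ((2:ℝ) ^ (-(d:ℝ) - 1) * (ρ / h) ^ (d:ℕ))
        ≤ Real.exp (Real.log 2 * (m:ℝ) ^ (d:ℕ)) := Real.exp_le_exp.mpr hN
      _ = Real.exp (Real.log ((2:ℝ) ^ (m ^ d : ℕ))) := by
          rw [Real.log_pow]
          push_cast
          ring_nf
      _ = (2:ℝ) ^ (m ^ d : ℕ) := Real.exp_log (by positivity)
      _ = ((2 ^ (m ^ d) : ℕ) : ℝ) := by push_cast; ring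
end
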